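/- Weaving classification: let C and C′ be skew-symmetric n×n matrices over 𝕐 and suppose there is a permutation ψ of the 2n indices of the unfoldings such that Ū(C′)_{ψ(i),ψ(j)} = Ū(C)_{i,j} for all i, j, and ψ maps each pair {k, k+n} of partner indices onto a pair of partner indices. Then there exist a permutation π of {1,…,n} and a function f : {1,…,n} → ℤ/2ℤ such that C′_{π(i),π(j)} = ε^{f(i)+f(j)} · C_{i,j} for all i, j. -/

import Mathlib

/-- The unfolding of a matrix `C = A + εB` over the split-complex integers
`𝕐 = ℤ[ε]/(ε²−1)` is the `2n×2n` integer block matrix `[[A, B], [B, A]]`;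
the partner of index `Sum.inl k` is `Sum.inr k` (i.e. `k + n`), and the
partner involution is `Sum.swap`. -/
def unfoldMatrix {n : ℕ} (C : Matrix (Fin n) (Fin n) (Zsqrtd 1)) :
    Matrix (Fin n ⊕ Fin n) (Fin n ⊕ Fin n) ℤ :=
  Matrix.fromBlocks (fun i j => (C i j).re) (fun i j => (C i j).im)
    (fun i j => (C i j).im) (fun i j => (C i j).re)

/-- Weaving classification: if the unfoldings of two skew-symmetric matrices over `𝕐`
are identified by a permutation `ψ` of the `2n` indices which maps partner pairs
to partner pairs, then there is a permutation `π` of `{1,…,n}` and a function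
`f : {1,…,n} → ℤ/2ℤ` with `C′_{π(i),π(j)} = ε^{f(i)+f(j)} · C_{i,j}` for all `i, j`. -/
theorem weaving_classification {n : ℕ}
    (C C' : Matrix (Fin n) (Fin n) (Zsqrtd 1))
    (hC : ∀ i j, C j i = -C i j) (hC' : ∀ i j, C' j i = -C' i j)
    (ψ : Equiv.Perm (Fin n ⊕ Fin n))
    (hψ : ∀ i j, unfoldMatrix C' (ψ i) (ψ j) = unfoldMatrix C i j)
    (hpartner : ∀ i, ψ (Sum.swap i) = Sum.swap (ψ i)) :
    ∃ (π : Equiv.Perm (Fin n)) (f : Fin n → ZMod 2),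
      ∀ i j, C' (π i) (π j) = (⟨0, 1⟩ : Zsqrtd 1) ^ (f i + f j).val * C i j := by
  classical
  have hswap : ∀ k : Fin n, ψ (Sum.inr k) = Sum.swap (ψ (Sum.inl k)) := fun k => by
    simpa using hpartner (Sum.inl k)
  set π₀ : Fin n → Fin n := fun k => Sum.elim id id (ψ (Sum.inl k)) with hπ₀
  have hinj : Function.Injective π₀ := by
    intro k k' h
    rcases h1 : ψ (Sum.inl k) with m | m <;> rcases h2 : ψ (Sum.inl k') with m' | m' <;>
        simp only [hπ₀, h1, h2, Sum.elim_inl, Sum.elim_inr, id] at h <;> subst h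
    · have := ψ.injective (h1.trans h2.symm); simpa using this
    · have h3 : ψ (Sum.inr k') = Sum.inl m := by rw [hswap, h2]; rfl
      have := ψ.injective (h1.trans h3.symm); simp at this
    · have h3 : ψ (Sum.inr k) = Sum.inl m := by rw [hswap, h1]; rfl
      have := ψ.injective (h3.trans h2.symm); simp at this
    · have := ψ.injective (h1.trans h2.symm); simpa using this
  refine ⟨Equiv.ofBijective π₀ (Finite.injective_iff_bijective.mp hinj),
    fun k => Sum.elim (fun _ => 0) (fun _ => 1) (ψ (Sum.inl k)), ?_⟩
  intro i j
  rcases h1 : ψ (Sum.inl i) with a | a <;> rcases h2 : ψ (Sum.inl j) with b | b <;>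
    simp only [Equiv.ofBijective_apply, hπ₀, h1, h2, Sum.elim_inl, Sum.elim_inr, id]
  · have e1 := hψ (Sum.inl i) (Sum.inl j)
    have e2 := hψ (Sum.inl i) (Sum.inr j)
    rw [h1, h2] at e1
    rw [h1, hswap, h2] at e2
    simp only [unfoldMatrix, Matrix.fromBlocks, Matrix.of_apply, Sum.elim_inl, Sum.elim_inr, Sum.swap_inl, Matrix.fromBlocks_apply₁₁,
      Matrix.fromBlocks_apply₁₂] at e1 e2
    simp [Zsqrtd.ext_iff, Zsqrtd.re_mul, Zsqrtd.im_mul, e1, e2,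
      Matrix.fromBlocks_apply₁₁, Matrix.fromBlocks_apply₁₂,
      show ((0:ZMod 2)+1).val = 1 from rfl, show ZMod.val (1:ZMod 2) = 1 from rfl, show ((1:ZMod 2)+0).val = 1 from rfl,
      show ((1:ZMod 2)+1).val = 0 from rfl]
  · have e1 := hψ (Sum.inl i) (Sum.inl j)
    have e2 := hψ (Sum.inl i) (Sum.inr j)
    rw [h1, h2] at e1
    rw [h1, hswap, h2] at e2
    simp only [unfoldMatrix, Matrix.fromBlocks, Matrix.of_apply, Sum.elim_inl, Sum.elim_inr, Sum.swap_inr, Matrix.fromBlocks_apply₁₂,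
      Matrix.fromBlocks_apply₁₁] at e1 e2
    simp [Zsqrtd.ext_iff, Zsqrtd.re_mul, Zsqrtd.im_mul, e1, e2,
      Matrix.fromBlocks_apply₁₁, Matrix.fromBlocks_apply₁₂,
      show ((0:ZMod 2)+1).val = 1 from rfl, show ZMod.val (1:ZMod 2) = 1 from rfl, show ((1:ZMod 2)+0).val = 1 from rfl,
      show ((1:ZMod 2)+1).val = 0 from rfl]
  · have e1 := hψ (Sum.inl i) (Sum.inl j)
    have e2 := hψ (Sum.inl i) (Sum.inr j)
    rw [h1, h2] at e1
    rw [h1, hswap, h2] at e2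
    simp only [unfoldMatrix, Matrix.fromBlocks, Matrix.of_apply, Sum.elim_inl, Sum.elim_inr, Sum.swap_inl, Matrix.fromBlocks_apply₂₁, Matrix.fromBlocks_apply₂₂,
      Matrix.fromBlocks_apply₁₁, Matrix.fromBlocks_apply₁₂] at e1 e2
    simp [Zsqrtd.ext_iff, Zsqrtd.re_mul, Zsqrtd.im_mul, e1, e2,
      Matrix.fromBlocks_apply₁₁, Matrix.fromBlocks_apply₁₂,
      show ((0:ZMod 2)+1).val = 1 from rfl, show ZMod.val (1:ZMod 2) = 1 from rfl, show ((1:ZMod 2)+0).val = 1 from rfl,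
      show ((1:ZMod 2)+1).val = 0 from rfl]
  · have e1 := hψ (Sum.inl i) (Sum.inl j)
    have e2 := hψ (Sum.inl i) (Sum.inr j)
    rw [h1, h2] at e1
    rw [h1, hswap, h2] at e2
    simp only [unfoldMatrix, Matrix.fromBlocks, Matrix.of_apply, Sum.elim_inl, Sum.elim_inr, Sum.swap_inr, Matrix.fromBlocks_apply₂₂,
      Matrix.fromBlocks_apply₂₁] at e1 e2
    simp [Zsqrtd.ext_iff, Zsqrtd.re_mul, Zsqrtd.im_mul, e1, e2,
      Matrix.fromBlocks_apply₁₁, Matrix.fromBlocks_apply₁₂,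
      show ((0:ZMod 2)+1).val = 1 from rfl, show ZMod.val (1:ZMod 2) = 1 from rfl, show ((1:ZMod 2)+0).val = 1 from rfl,
      show ((1:ZMod 2)+1).val = 0 from rfl]
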